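/- Let f : ℝ^d → ℝ be convex and L-smooth, g proper convex lsc, F = f + g, η ∈ (0, 1/L]. For all x, y: F(prox_{ηg}(y − η∇f(y))) ≤ F(x) + ⟨G_η(y), y − x⟩ − (η/2)‖G_η(y)‖², where G_η(y) = (y − prox_{ηg}(y − η∇f(y)))/η. -/

import Mathlib

set_option maxHeartbeats 1000000

theorem prox_grad_descent_lemma {d : ℕ} (L η : ℝ) (hL : 0 < L)
    (hη : 0 < η) (hηL : η ≤ 1 / L)
    (f g : EuclideanSpace ℝ (Fin d) → ℝ)
    (f' : EuclideanSpace ℝ (Fin d) → EuclideanSpace ℝ (Fin d))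
    (hconvf : ConvexOn ℝ Set.univ f)
    (hgrad : ∀ x, HasGradientAt f (f' x) x)
    (hlip : ∀ x y, ‖f' x - f' y‖ ≤ L * ‖x - y‖)
    (hconvg : ConvexOn ℝ Set.univ g) (hlsc : LowerSemicontinuous g)
    (y p : EuclideanSpace ℝ (Fin d))
    (hp : ∀ z, 1 / 2 * ‖p - (y - η • f' y)‖ ^ 2 + η * g p
        ≤ 1 / 2 * ‖z - (y - η • f' y)‖ ^ 2 + η * g z) :
    ∀ x, f p + g p ≤ f x + g x + (inner ℝ ((1 / η) • (y - p)) (y - x) : ℝ)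
        - η / 2 * ‖(1 / η) • (y - p)‖ ^ 2 := by
  intro x
  set u := y - η • f' y with hu
  set v := p - y with hv
  -- derivative of f along lines
  have hline : ∀ (w : EuclideanSpace ℝ (Fin d)) (t : ℝ),
      HasDerivAt (fun s : ℝ => f (y + s • w)) (inner ℝ (f' (y + t • w)) w : ℝ) t := by
    intro w t
    have h1 : HasDerivAt (fun s : ℝ => y + s • w) w t := by
      simpa using ((hasDerivAt_id t).smul_const w).const_add y
    have h2 := ((hgrad (y + t • w)).hasFDerivAt).comp_hasDerivAt t h1
    simpa [InnerProductSpace.toDual_apply_apply, Function.comp_def] using h2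
  -- (A) convexity first-order condition
  have hA : (inner ℝ (f' y) (x - y) : ℝ) ≤ f x - f y := by
    have hcomp : ConvexOn ℝ Set.univ
        (f ∘ (AffineMap.lineMap y x : ℝ →ᵃ[ℝ] EuclideanSpace ℝ (Fin d))) := by
      simpa using hconvf.comp_affineMap (AffineMap.lineMap y x)
    have hder : HasDerivAt (f ∘ (AffineMap.lineMap y x : ℝ →ᵃ[ℝ] EuclideanSpace ℝ (Fin d)))
        (inner ℝ (f' y) (x - y) : ℝ) 0 := by
      have h1 : HasDerivAt
          (fun s : ℝ => (AffineMap.lineMap y x : ℝ →ᵃ[ℝ] EuclideanSpace ℝ (Fin d)) s)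
          (x - y) 0 := by
        simp only [AffineMap.lineMap_apply, vsub_eq_sub, vadd_eq_add]
        simpa using ((hasDerivAt_id (0 : ℝ)).smul_const (x - y)).add_const y
      have h2 := ((hgrad ((AffineMap.lineMap y x : ℝ →ᵃ[ℝ] EuclideanSpace ℝ (Fin d))
          0)).hasFDerivAt).comp_hasDerivAt 0 h1
      simpa [InnerProductSpace.toDual_apply_apply] using h2
    have hs := hcomp.le_slope_of_hasDerivAt (Set.mem_univ (0 : ℝ)) (Set.mem_univ (1 : ℝ))
      one_pos hder
    simpa [slope_def_field] using hs
  -- (B) descent lemma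
  have hB : f p ≤ f y + (inner ℝ (f' y) v : ℝ) + L / 2 * ‖v‖ ^ 2 := by
    set c1 : ℝ := (inner ℝ (f' y) v : ℝ) with hc1
    set c2 : ℝ := L * ‖v‖ ^ 2 / 2 with hc2
    set q : ℝ → ℝ := fun t => f (y + t • v) - (c1 * t + c2 * t ^ 2) with hqdef
    have hq' : ∀ t : ℝ, HasDerivAt q ((inner ℝ (f' (y + t • v)) v : ℝ) - (c1 + c2 * (2 * t))) t := by
      intro t
      have h2 : HasDerivAt (fun s : ℝ => c1 * s + c2 * s ^ 2) (c1 + c2 * (2 * t)) t := by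
        have ha := (hasDerivAt_id t).const_mul c1
        have hb := (hasDerivAt_pow 2 t).const_mul c2
        refine (ha.add hb).congr_deriv ?_
        norm_num
      exact (hline v t).sub h2
    have hdiff : Differentiable ℝ q := fun t => (hq' t).differentiableAt
    have hmono : AntitoneOn q (Set.Icc 0 1) := by
      apply antitoneOn_of_deriv_nonpos (convex_Icc 0 1) hdiff.continuous.continuousOn
        (hdiff.differentiableOn)
      intro t ht
      rw [interior_Icc] at ht
      rw [(hq' t).deriv]
      have hz : ‖f' (y + t • v) - f' y‖ ≤ L * (t * ‖v‖) := by
        have h3 := hlip (y + t • v) y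
        simpa [norm_smul, abs_of_pos ht.1, mul_assoc] using h3
      have hcs : (inner ℝ (f' (y + t • v)) v : ℝ) - c1 ≤ ‖f' (y + t • v) - f' y‖ * ‖v‖ := by
        rw [hc1, show (inner ℝ (f' (y + t • v)) v : ℝ) - (inner ℝ (f' y) v : ℝ)
          = (inner ℝ (f' (y + t • v) - f' y) v : ℝ) from by rw [inner_sub_left]]
        exact real_inner_le_norm _ _
      have h4 := mul_le_mul_of_nonneg_right hz (norm_nonneg v)
      nlinarith [hcs, h4, ht.1.le]
    have h01 := hmono (Set.left_mem_Icc.mpr zero_le_one) (Set.right_mem_Icc.mpr zero_le_one)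
      zero_le_one
    have hyv : y + (1 : ℝ) • v = p := by rw [hv]; simp
    simp only [hqdef, hyv, zero_smul, add_zero, one_pow, mul_one, mul_zero, zero_pow,
      sub_zero] at h01
    rw [hc2] at h01
    linarith [h01]
  -- (C) prox subgradient inequality
  have hCkey : ∀ t : ℝ, 0 < t → t ≤ 1 →
      0 ≤ ((inner ℝ (p - u) (x - p) : ℝ) + η * (g x - g p)) + t * (‖x - p‖ ^ 2 / 2) := by
    intro t ht0 ht1
    have hz := hp (p + t • (x - p))
    have e1 : p + t • (x - p) - u = (p - u) + t • (x - p) := by abel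
    have e2 : ‖(p - u) + t • (x - p)‖ ^ 2
        = ‖p - u‖ ^ 2 + 2 * (t * (inner ℝ (p - u) (x - p) : ℝ)) + t ^ 2 * ‖x - p‖ ^ 2 := by
      rw [norm_add_sq_real, real_inner_smul_right, norm_smul, Real.norm_eq_abs, abs_of_pos ht0]
      ring
    rw [e1, e2] at hz
    have e3 : g (p + t • (x - p)) ≤ (1 - t) * g p + t * g x := by
      have hmod : p + t • (x - p) = (1 - t) • p + t • x := by module
      rw [hmod]
      exact hconvg.2 (Set.mem_univ p) (Set.mem_univ x) (by linarith) ht0.le (by ring)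
    have h5 : η * g (p + t • (x - p)) ≤ η * g p + t * (η * (g x - g p)) := by
      linarith [mul_le_mul_of_nonneg_left e3 hη.le]
    have h4 : 0 ≤ t * (((inner ℝ (p - u) (x - p) : ℝ) + η * (g x - g p))
        + t * (‖x - p‖ ^ 2 / 2)) := by linarith [hz, h5]
    have h6 : t * 0 ≤ t * (((inner ℝ (p - u) (x - p) : ℝ) + η * (g x - g p))
        + t * (‖x - p‖ ^ 2 / 2)) := by simpa using h4
    exact le_of_mul_le_mul_left h6 ht0
  have hb0 : 0 ≤ (inner ℝ (p - u) (x - p) : ℝ) + η * (g x - g p) := by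
    set b0 := (inner ℝ (p - u) (x - p) : ℝ) + η * (g x - g p) with hb0def
    set c := ‖x - p‖ ^ 2 / 2 with hcdef
    by_contra hneg
    push_neg at hneg
    have hc : (0 : ℝ) ≤ c := by positivity
    have hcc : (0 : ℝ) < c + 1 := by linarith
    have ht0 : 0 < min 1 (-b0 / (c + 1)) := lt_min one_pos (div_pos (neg_pos.2 hneg) hcc)
    have hkey := hCkey _ ht0 (min_le_left _ _)
    have h2 : min 1 (-b0 / (c + 1)) * c ≤ (-b0 / (c + 1)) * c :=
      mul_le_mul_of_nonneg_right (min_le_right _ _) hc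
    have h3 : (-b0 / (c + 1)) * c < -b0 := by
      rw [div_mul_eq_mul_div, div_lt_iff₀ hcc]
      nlinarith
    linarith
  -- scalar abbreviations
  set A1 := (inner ℝ (f' y) (x - y) : ℝ) with hA1
  set A2 := (inner ℝ (f' y) v : ℝ) with hA2
  set B1 := (inner ℝ (y - p) (y - x) : ℝ) with hB1
  have hvn : ‖v‖ = ‖y - p‖ := by rw [hv, norm_sub_rev]
  -- rewrite the prox inequality's inner ℝ product
  have i1 : (inner ℝ (p - u) (x - p) : ℝ) = (B1 - ‖y - p‖ ^ 2) + η * (A1 - A2) := by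
    have e : p - u = v + η • f' y := by rw [hu, hv]; abel
    have e' : x - p = (x - y) - v := by rw [hv]; abel
    rw [e, e', inner_add_left, real_inner_smul_left]
    have h1 : (inner ℝ v (x - y) : ℝ) = B1 := by
      rw [hB1, hv, show p - y = -(y - p) from by abel, show (x - y : EuclideanSpace ℝ (Fin d))
        = -(y - x) from by abel, inner_neg_neg]
    have h2 : (inner ℝ v v : ℝ) = ‖y - p‖ ^ 2 := by
      rw [real_inner_self_eq_norm_sq, hvn]
    have g1 : (inner ℝ v (x - y - v) : ℝ) = B1 - ‖y - p‖ ^ 2 := by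
      rw [inner_sub_right, h1, h2]
    have g2 : (inner ℝ (f' y) (x - y - v) : ℝ) = A1 - A2 := by
      rw [inner_sub_right, ← hA1, ← hA2]
    rw [g1, g2]
  rw [i1] at hb0
  set K := 1 / (2 * η) * ‖y - p‖ ^ 2 with hK
  have hN : (0 : ℝ) ≤ ‖y - p‖ ^ 2 := by positivity
  have hLη : L * η ≤ 1 := by
    have := (le_div_iff₀ hL).mp hηL
    linarith [this]
  have hLN : L / 2 * ‖y - p‖ ^ 2 ≤ K := by
    rw [hK]
    apply mul_le_mul_of_nonneg_right _ hN
    rw [div_le_div_iff₀ two_pos (by positivity)]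
    linarith [hLη]
  have hC' : g p ≤ g x + (1 / η) * B1 - 2 * K + (A1 - A2) := by
    refine le_of_mul_le_mul_left ?_ hη
    have hexp : η * (g x + (1 / η) * B1 - 2 * K + (A1 - A2))
        = η * g x + B1 - ‖y - p‖ ^ 2 + η * (A1 - A2) := by
      rw [hK]; field_simp
    rw [hexp]
    linarith [hb0]
  rw [hv, hvn] at hB
  -- rewrite goal
  have hgi : (inner ℝ ((1 / η) • (y - p)) (y - x) : ℝ) = (1 / η) * B1 := by
    rw [real_inner_smul_left, hB1]
  have hgn : η / 2 * ‖(1 / η) • (y - p)‖ ^ 2 = K := by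
    rw [norm_smul, Real.norm_eq_abs, abs_of_pos (by positivity : (0:ℝ) < 1 / η), hK]
    field_simp
  rw [hgi, hgn]
  have h2K : (1 / η) * ‖y - p‖ ^ 2 = 2 * K := by
    rw [hK]; field_simp
  linarith [hA, hB, hC', hLN, h2K]
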